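/- Let f(x) = γ·ln(Σ_{j=1}^m exp([Ax]_j/γ)) − ⟨b, x⟩ with γ > 0. Then each partial derivative ∇_i f is componentwise Lipschitz: for all x ∈ ℝⁿ and u ∈ ℝ, |∇_i f(x + u eᵢ) − ∇_i f(x)| ≤ L_i·|u| with L_i = (1/γ)·max_{j=1,…,m} |A_{ji}|² (in particular with L_i = (1/γ)·max_j |A_{ji}| when all entries satisfy |A_{ji}| ≤ 1). -/

import Mathlib

open Real Finset

lemma aux1d {m : ℕ} [NeZero m] (a c : Fin m → ℝ) {γ : ℝ} (hγ : 0 < γ) (u : ℝ) :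
    |(∑ j, a j * Real.exp ((c j + u * a j) / γ)) / (∑ j, Real.exp ((c j + u * a j) / γ))
      - (∑ j, a j * Real.exp (c j / γ)) / (∑ j, Real.exp (c j / γ))|
      ≤ (1 / γ) * (⨆ j, |a j| ^ 2) * |u| := by
  have hne : Nonempty (Fin m) := Fin.pos_iff_nonempty.mp (Nat.pos_of_ne_zero (NeZero.ne m))
  set S : ℝ := ⨆ j, |a j| ^ 2 with hS
  have hbdd : BddAbove (Set.range fun j => |a j| ^ 2) := Set.Finite.bddAbove (Set.finite_range _)
  have hjS : ∀ j, a j ^ 2 ≤ S := fun j => by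
    rw [← sq_abs]; exact le_ciSup hbdd j
  have hS0 : 0 ≤ S := le_trans (sq_nonneg _) (hjS (Classical.arbitrary _))
  set P : ℝ → ℝ := fun t => ∑ j, Real.exp ((c j + t * a j) / γ) with hPdef
  set N : ℝ → ℝ := fun t => ∑ j, a j * Real.exp ((c j + t * a j) / γ) with hNdef
  set Q : ℝ → ℝ := fun t => ∑ j, a j ^ 2 * Real.exp ((c j + t * a j) / γ) with hQdef
  have hP : ∀ t, 0 < P t := fun t => Finset.sum_pos (fun j _ => Real.exp_pos _) Finset.univ_nonempty
  have hE : ∀ (t : ℝ) (j : Fin m), HasDerivAt (fun t => Real.exp ((c j + t * a j) / γ))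
      (a j / γ * Real.exp ((c j + t * a j) / γ)) t := by
    intro t j
    have h1 : HasDerivAt (fun t : ℝ => (c j + t * a j) / γ) (a j / γ) t := by
      simpa using (((hasDerivAt_id t).mul_const (a j)).const_add (c j)).div_const γ
    simpa [mul_comm] using h1.exp
  have hPd : ∀ t, HasDerivAt P (N t / γ) t := by
    intro t
    have := HasDerivAt.fun_sum (fun j (_ : j ∈ Finset.univ) => hE t j)
    simpa [hPdef, hNdef, Finset.sum_div, div_mul_eq_mul_div, mul_div_assoc] using this
  have hNd : ∀ t, HasDerivAt N (Q t / γ) t := by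
    intro t
    have := HasDerivAt.fun_sum (fun j (_ : j ∈ Finset.univ) => (hE t j).const_mul (a j))
    have h2 : ∀ j : Fin m, a j * (a j / γ * Real.exp ((c j + t * a j) / γ))
        = a j ^ 2 * Real.exp ((c j + t * a j) / γ) / γ := fun j => by ring
    simpa [hNdef, hQdef, h2, Finset.sum_div] using this
  set G : ℝ → ℝ := fun t => N t / P t with hGdef
  have hGd : ∀ t, HasDerivAt G ((Q t / γ * P t - N t * (N t / γ)) / P t ^ 2) t :=
    fun t => (hNd t).div (hPd t) (hP t).ne'
  have hbound : ∀ t, |(Q t / γ * P t - N t * (N t / γ)) / P t ^ 2| ≤ S / γ := by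
    intro t
    have hQP : Q t ≤ S * P t := by
      rw [hQdef, hPdef, Finset.mul_sum]
      exact Finset.sum_le_sum fun j _ => by
        have := hjS j
        nlinarith [Real.exp_pos ((c j + t * a j) / γ)]
    have hQ0 : 0 ≤ Q t :=
      Finset.sum_nonneg fun j _ => mul_nonneg (sq_nonneg _) (Real.exp_pos _).le
    have hNabs : |N t| ≤ Real.sqrt S * P t := by
      calc |N t| ≤ ∑ j, |a j * Real.exp ((c j + t * a j) / γ)| := Finset.abs_sum_le_sum_abs _ _
        _ ≤ ∑ j, Real.sqrt S * Real.exp ((c j + t * a j) / γ) := by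
            apply Finset.sum_le_sum
            intro j _
            rw [abs_mul, abs_of_pos (Real.exp_pos _)]
            apply mul_le_mul_of_nonneg_right _ (Real.exp_pos _).le
            rw [← Real.sqrt_sq_eq_abs]
            exact Real.sqrt_le_sqrt (hjS j)
        _ = Real.sqrt S * P t := by rw [hPdef, Finset.mul_sum]
    have hN2 : N t ^ 2 ≤ S * P t ^ 2 := by
      have := sq_le_sq' (neg_le_of_abs_le hNabs) (le_of_abs_le hNabs)
      calc N t ^ 2 ≤ (Real.sqrt S * P t) ^ 2 := this
        _ = S * P t ^ 2 := by rw [mul_pow, Real.sq_sqrt hS0]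
    have hP2 : (0:ℝ) < P t ^ 2 := pow_pos (hP t) 2
    have key : |Q t * P t - N t ^ 2| ≤ S * P t ^ 2 := by
      rw [abs_le]
      constructor <;> nlinarith [hQP, hN2, hQ0, hP t, sq_nonneg (N t)]
    rw [abs_div, abs_of_pos hP2,
      show Q t / γ * P t - N t * (N t / γ) = (Q t * P t - N t ^ 2) / γ from by ring,
      abs_div, abs_of_pos hγ, div_div, div_le_div_iff₀ (by positivity) hγ]
    nlinarith [key, hγ, hP2]
  have hlip := Convex.norm_image_sub_le_of_norm_hasDerivWithin_le
    (f := G) (f' := fun t => (Q t / γ * P t - N t * (N t / γ)) / P t ^ 2)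
    (s := Set.univ) (C := S / γ)
    (fun t _ => (hGd t).hasDerivWithinAt) (fun t _ => by simpa only [Real.norm_eq_abs] using hbound t)
    convex_univ (Set.mem_univ 0) (Set.mem_univ u)
  have h0 : G 0 = (∑ j, a j * Real.exp (c j / γ)) / (∑ j, Real.exp (c j / γ)) := by
    simp [hGdef, hNdef, hPdef]
  have hu : G u = (∑ j, a j * Real.exp ((c j + u * a j) / γ)) / (∑ j, Real.exp ((c j + u * a j) / γ)) := rfl
  rw [← hu, ← h0, ← Real.norm_eq_abs]
  calc ‖G u - G 0‖ ≤ S / γ * ‖u - 0‖ := hlip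
    _ = 1 / γ * S * |u| := by rw [sub_zero, Real.norm_eq_abs]; ring

set_option maxHeartbeats 2000000 in
lemma fderivApp {m n : ℕ} [NeZero m] (A : Matrix (Fin m) (Fin n) ℝ)
    (b : EuclideanSpace ℝ (Fin n)) {γ : ℝ} (hγ : 0 < γ) (y : EuclideanSpace ℝ (Fin n)) (i : Fin n) :
    fderiv ℝ (fun x : EuclideanSpace ℝ (Fin n) =>
        γ * Real.log (∑ j, Real.exp (A.mulVec x j / γ)) - (inner ℝ b x : ℝ)) y
        (EuclideanSpace.single i 1)
      = (∑ j, A j i * Real.exp (A.mulVec y j / γ)) / (∑ j, Real.exp (A.mulVec y j / γ)) - b i := by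
  have hne : Nonempty (Fin m) := Fin.pos_iff_nonempty.mp (Nat.pos_of_ne_zero (NeZero.ne m))
  set L : Fin m → (EuclideanSpace ℝ (Fin n) →L[ℝ] ℝ) :=
    fun j => ∑ k, A j k • EuclideanSpace.proj k with hLdef
  have hL : ∀ (j : Fin m) (x : EuclideanSpace ℝ (Fin n)), L j x = A.mulVec x j := by
    intro j x
    simp [hLdef, Matrix.mulVec, dotProduct, ContinuousLinearMap.sum_apply]
  have hP : 0 < ∑ j, Real.exp (A.mulVec y j / γ) :=
    Finset.sum_pos (fun j _ => Real.exp_pos _) Finset.univ_nonempty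
  have hj : ∀ j : Fin m, HasFDerivAt (fun x : EuclideanSpace ℝ (Fin n) => Real.exp (A.mulVec x j / γ))
      (Real.exp (A.mulVec y j / γ) • (γ⁻¹ • L j)) y := by
    intro j
    have h1 : HasFDerivAt (fun x : EuclideanSpace ℝ (Fin n) => A.mulVec x j) (L j) y := by
      have := (L j).hasFDerivAt (x := y)
      rwa [show ⇑(L j) = fun x : EuclideanSpace ℝ (Fin n) => A.mulVec x j from funext (hL j)] at this
    have h2 : HasFDerivAt (fun x : EuclideanSpace ℝ (Fin n) => A.mulVec x j / γ) (γ⁻¹ • L j) y := by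
      simpa [div_eq_inv_mul] using h1.const_mul γ⁻¹
    simpa using h2.exp
  have hsum : HasFDerivAt (fun x : EuclideanSpace ℝ (Fin n) => ∑ j, Real.exp (A.mulVec x j / γ))
      (∑ j, Real.exp (A.mulVec y j / γ) • (γ⁻¹ • L j)) y :=
    HasFDerivAt.fun_sum (fun j _ => hj j)
  have hlog := (hsum.log hP.ne').const_mul γ
  have hinner : HasFDerivAt (fun x : EuclideanSpace ℝ (Fin n) => (inner ℝ b x : ℝ))
      (innerSL ℝ b) y := (innerSL ℝ b).hasFDerivAt
  have hf := hlog.fun_sub hinner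
  rw [hf.fderiv]
  have hLi : ∀ j, L j (EuclideanSpace.single i 1) = A j i := by
    intro j
    rw [hL]
    simp [Matrix.mulVec, dotProduct, EuclideanSpace.single_apply]
  simp only [ContinuousLinearMap.sub_apply, ContinuousLinearMap.smul_apply,
    ContinuousLinearMap.coe_sum', Finset.sum_apply, hLi, innerSL_apply_apply,
    EuclideanSpace.inner_single_right, smul_eq_mul]
  rw [Finset.mul_sum]
  have : ∀ j : Fin m, (∑ j, Real.exp (A.mulVec y j / γ))⁻¹ *
      (Real.exp (A.mulVec y j / γ) * (γ⁻¹ * A j i))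
      = (1 / γ) * ((A j i * Real.exp (A.mulVec y j / γ)) / (∑ j, Real.exp (A.mulVec y j / γ))) := by
    intro j; field_simp
  rw [Finset.sum_congr rfl fun j _ => this j, ← Finset.mul_sum, ← Finset.sum_div]
  field_simp
  simp only [starRingEnd_apply, star_trivial, mul_comm γ⁻¹]

theorem stmt11 {m n : ℕ} [NeZero m] (A : Matrix (Fin m) (Fin n) ℝ)
    (b : EuclideanSpace ℝ (Fin n)) (γ : ℝ) (hγ : 0 < γ) :
    let f : EuclideanSpace ℝ (Fin n) → ℝ := fun x =>
      γ * Real.log (∑ j, Real.exp (A.mulVec x j / γ)) - (inner ℝ b x : ℝ)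
    (∀ (x : EuclideanSpace ℝ (Fin n)) (u : ℝ) (i : Fin n),
      |fderiv ℝ f (x + u • EuclideanSpace.single i 1) (EuclideanSpace.single i 1)
          - fderiv ℝ f x (EuclideanSpace.single i 1)|
        ≤ (1 / γ) * (⨆ j, |A j i| ^ 2) * |u|) ∧
    ((∀ j i, |A j i| ≤ 1) →
      ∀ (x : EuclideanSpace ℝ (Fin n)) (u : ℝ) (i : Fin n),
        |fderiv ℝ f (x + u • EuclideanSpace.single i 1) (EuclideanSpace.single i 1)
            - fderiv ℝ f x (EuclideanSpace.single i 1)|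
          ≤ (1 / γ) * (⨆ j, |A j i|) * |u|) := by
  intro f
  have hne : Nonempty (Fin m) := Fin.pos_iff_nonempty.mp (Nat.pos_of_ne_zero (NeZero.ne m))
  have key : ∀ (x : EuclideanSpace ℝ (Fin n)) (u : ℝ) (i : Fin n),
      |fderiv ℝ f (x + u • EuclideanSpace.single i 1) (EuclideanSpace.single i 1)
          - fderiv ℝ f x (EuclideanSpace.single i 1)|
        ≤ (1 / γ) * (⨆ j, |A j i| ^ 2) * |u| := by
    intro x u i
    have hmv : ∀ j, A.mulVec (x + u • EuclideanSpace.single i 1 : EuclideanSpace ℝ (Fin n)) j = A.mulVec x j + u * A j i := by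
      intro j
      have hxk : ∀ k, ((x + u • EuclideanSpace.single i 1 : EuclideanSpace ℝ (Fin n)) : Fin n → ℝ) k
          = x k + u * (if k = i then 1 else 0) := by
        intro k
        simp [EuclideanSpace.single_apply]
      simp [Matrix.mulVec, dotProduct, hxk, mul_add, Finset.sum_add_distrib,
        mul_ite, mul_comm, mul_left_comm]
    rw [show f = fun x : EuclideanSpace ℝ (Fin n) =>
        γ * Real.log (∑ j, Real.exp (A.mulVec x j / γ)) - (inner ℝ b x : ℝ) from rfl,
      fderivApp A b hγ _ i, fderivApp A b hγ x i]
    simp only [hmv]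
    have h := aux1d (fun j => A j i) (fun j => A.mulVec x j) hγ u
    simpa [sub_sub_sub_cancel_right] using h
  refine ⟨key, fun hA x u i => (key x u i).trans ?_⟩
  have h1 : (⨆ j, |A j i| ^ 2) ≤ ⨆ j, |A j i| := by
    apply ciSup_mono (Set.Finite.bddAbove (Set.finite_range _))
    intro j
    have h2 := hA j i
    nlinarith [abs_nonneg (A j i)]
  gcongr
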